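/- Let F be a compact metric space and L : F × F → [0,∞) continuous and symmetric. If ρ is a minimizer of S(μ) = ∫∫ L dμ dμ over Borel probability measures on F, then the function ℓ(x) = ∫_F L(x,y) dρ(y) satisfies ℓ(x) = inf_F ℓ for all x in the support of ρ (Euler–Lagrange equations). -/

import Mathlib

open MeasureTheory

theorem euler_lagrange_of_minimizer {F : Type*} [MetricSpace F] [CompactSpace F]
    [MeasurableSpace F] [BorelSpace F]
    (L : F → F → ℝ) (hLnonneg : ∀ x y, 0 ≤ L x y) (hLsymm : ∀ x y, L x y = L y x)
    (hL : Continuous fun q : F × F => L q.1 q.2)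
    (ρ : Measure F) [IsProbabilityMeasure ρ]
    (hmin : ∀ μ : Measure F, IsProbabilityMeasure μ →
      (∫ x, ∫ y, L x y ∂ρ ∂ρ) ≤ ∫ x, ∫ y, L x y ∂μ ∂μ) :
    ∀ x : F, (∀ U : Set F, IsOpen U → x ∈ U → 0 < ρ U) →
      (∫ y, L x y ∂ρ) = ⨅ x' : F, ∫ y, L x' y ∂ρ := by
  intro x hx
  -- integrability of continuous functions
  have hint : ∀ (μ : Measure F) [IsFiniteMeasure μ] (f : F → ℝ), Continuous f →
      Integrable f μ := by
    intro μ _ f hf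
    exact hf.integrable_of_hasCompactSupport (isClosed_tsupport f).isCompact
  set ℓ : F → ℝ := fun w => ∫ y, L w y ∂ρ with hℓdef
  have hLx : ∀ w : F, Continuous (L w) := by
    intro w
    exact hL.comp (Continuous.prodMk_right w)
  have hLy : ∀ w : F, Continuous (fun v => L v w) := by
    intro w
    exact hL.comp (Continuous.prodMk_left w)
  have hℓcont : Continuous ℓ := by
    have := continuous_parametric_integral_of_continuous (μ := ρ) (f := L)
      hL isCompact_univ
    simpa [Measure.restrict_univ] using this
  set S : ℝ := ∫ w, ℓ w ∂ρ with hSdef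
  -- Step A: S ≤ ℓ z for all z
  have key : ∀ z : F, S ≤ ℓ z := by
    intro z
    set A : ℝ := ℓ z with hA
    set B : ℝ := L z z with hB
    have hg : ∀ t : ℝ, 0 < t → t ≤ 1 →
        S ≤ (1 - t) * ((1 - t) * S + t * A) + t * ((1 - t) * A + t * B) := by
      intro t ht0 ht1
      set c : ENNReal := ENNReal.ofReal t with hc
      have hc1 : c ≤ 1 := ENNReal.ofReal_le_one.mpr ht1
      set μ : Measure F := (1 - c) • ρ + c • Measure.dirac z with hμ
      have hμprob : IsProbabilityMeasure μ := by
        constructor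
        simp [hμ, Measure.add_apply, Measure.smul_apply, smul_eq_mul,
          tsub_add_cancel_of_le hc1]
      haveI := hμprob
      have hcr : c.toReal = t := ENNReal.toReal_ofReal ht0.le
      have hcr' : (1 - c).toReal = 1 - t := by
        rw [ENNReal.toReal_sub_of_le hc1 (by simp)]
        simp [hcr]
      have hmeas : ∀ f : F → ℝ, Continuous f →
          ∫ w, f w ∂μ = (1 - t) * ∫ w, f w ∂ρ + t * f z := by
        intro f hf
        have h1 : Integrable f ((1 - c) • ρ) := by
          exact ((hint μ f hf).left_of_add_measure)
        have h2 : Integrable f (c • Measure.dirac z) := by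
          exact ((hint μ f hf).right_of_add_measure)
        rw [hμ, integral_add_measure h1 h2, integral_smul_measure, integral_smul_measure,
          integral_dirac, hcr, hcr']
        simp [smul_eq_mul]
      have hinner : ∀ w : F, ∫ y, L w y ∂μ = (1 - t) * ℓ w + t * L w z := by
        intro w
        exact hmeas (L w) (hLx w)
      have houter : ∫ w, ∫ y, L w y ∂μ ∂μ
          = (1 - t) * ((1 - t) * S + t * A) + t * ((1 - t) * A + t * B) := by
        have hcont2 : Continuous (fun w => (1 - t) * ℓ w + t * L w z) := by
          exact ((continuous_const.mul hℓcont).add (continuous_const.mul (hLy z)))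
        calc ∫ w, ∫ y, L w y ∂μ ∂μ
            = ∫ w, ((1 - t) * ℓ w + t * L w z) ∂μ := by
              apply integral_congr_ae
              filter_upwards with w using hinner w
          _ = (1 - t) * ∫ w, ((1 - t) * ℓ w + t * L w z) ∂ρ
                + t * ((1 - t) * ℓ z + t * L z z) := hmeas _ hcont2
          _ = (1 - t) * ((1 - t) * S + t * A) + t * ((1 - t) * A + t * B) := by
              rw [integral_add ((hint ρ ℓ hℓcont).const_mul _)
                ((hint ρ _ (hLy z)).const_mul _), integral_const_mul, integral_const_mul]
              have : ∫ w, L w z ∂ρ = A := by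
                rw [hA, hℓdef]
                exact integral_congr_ae (Filter.Eventually.of_forall fun w => hLsymm w z)
              rw [this]
      have := hmin μ hμprob
      rw [houter] at this
      exact this
    -- divide by t and take the limit t → 0 along 1/(n+1)
    have hh : ∀ n : ℕ, 0 ≤ (fun t : ℝ => t * S + 2 * (1 - t) * A + t * B - 2 * S)
        (1 / (n + 1 : ℝ)) := by
      intro n
      set t : ℝ := 1 / (n + 1 : ℝ) with hT
      have ht0 : 0 < t := by positivity
      have ht1 : t ≤ 1 := by
        rw [hT, div_le_one (by positivity)]
        linarith [Nat.cast_nonneg (α := ℝ) n]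
      have := hg t ht0 ht1
      have htmul : 0 ≤ t * (t * S + 2 * (1 - t) * A + t * B - 2 * S) := by nlinarith
      have := (mul_le_mul_iff_right₀ ht0).mp
        (by linarith : t * 0 ≤ t * (t * S + 2 * (1 - t) * A + t * B - 2 * S))
      simpa using this
    have hlim : Filter.Tendsto
        (fun n : ℕ => (fun t : ℝ => t * S + 2 * (1 - t) * A + t * B - 2 * S)
          (1 / (n + 1 : ℝ))) Filter.atTop (nhds (2 * A - 2 * S)) := by
      have hc : Continuous (fun t : ℝ => t * S + 2 * (1 - t) * A + t * B - 2 * S) := by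
        continuity
      have h0 : Filter.Tendsto (fun n : ℕ => 1 / (n + 1 : ℝ)) Filter.atTop (nhds 0) :=
        tendsto_one_div_add_atTop_nhds_zero_nat
      have := (hc.tendsto 0).comp h0
      simpa [Function.comp_def] using this
    have h0le : (0 : ℝ) ≤ 2 * A - 2 * S :=
      ge_of_tendsto hlim (Filter.Eventually.of_forall hh)
    linarith
  -- the minimizer z₀ of ℓ
  haveI : Nonempty F := ⟨x⟩
  obtain ⟨z₀, -, hz₀'⟩ := isCompact_univ.exists_isMinOn ⟨x, Set.mem_univ x⟩
    hℓcont.continuousOn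
  have hz₀ : ∀ w : F, ℓ z₀ ≤ ℓ w := fun w => hz₀' (Set.mem_univ w)
  have hm : (⨅ x' : F, ℓ x') = ℓ z₀ := by
    apply le_antisymm
    · exact ciInf_le ⟨ℓ z₀, Set.forall_mem_range.mpr fun w => hz₀ w⟩ z₀
    · exact le_ciInf fun w => hz₀ w
  rw [show (⨅ x' : F, ∫ y, L x' y ∂ρ) = ℓ z₀ from hm]
  -- suppose ℓ x > ℓ z₀ and derive a contradiction
  by_contra hne
  have hlt : ℓ z₀ < ℓ x := lt_of_le_of_ne (hz₀ x) (Ne.symm hne)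
  set ε : ℝ := (ℓ x - ℓ z₀) / 2 with hε
  have hεpos : 0 < ε := by rw [hε]; linarith
  set U : Set F := {w | ℓ z₀ + ε < ℓ w} with hU
  have hUopen : IsOpen U := isOpen_lt continuous_const hℓcont
  have hxU : x ∈ U := by
    rw [hU]; simp only [Set.mem_setOf_eq, hε]; linarith
  have hρU : 0 < ρ U := hx U hUopen hxU
  have hρUreal : 0 < (ρ U).toReal :=
    ENNReal.toReal_pos hρU.ne' (measure_ne_top ρ U)
  have hUm : MeasurableSet U := hUopen.measurableSet
  have hℓint : Integrable ℓ ρ := hint ρ ℓ hℓcont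
  -- split the integral
  have hsplit : ∫ w, ℓ w ∂ρ = (∫ w in U, ℓ w ∂ρ) + ∫ w in Uᶜ, ℓ w ∂ρ :=
    (integral_add_compl hUm hℓint).symm
  have h1 : (ρ U).toReal * (ℓ z₀ + ε) ≤ ∫ w in U, ℓ w ∂ρ := by
    have := setIntegral_mono_on (integrableOn_const (C := ℓ z₀ + ε) (measure_lt_top ρ U).ne)
      hℓint.integrableOn hUm (fun w hw => le_of_lt hw)
    simpa [setIntegral_const, smul_eq_mul, Measure.real] using this
  have h2 : (ρ Uᶜ).toReal * ℓ z₀ ≤ ∫ w in Uᶜ, ℓ w ∂ρ := by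
    have := setIntegral_mono_on (integrableOn_const (C := ℓ z₀) (measure_lt_top ρ Uᶜ).ne)
      hℓint.integrableOn hUm.compl (fun w _ => hz₀ w)
    simpa [setIntegral_const, smul_eq_mul, Measure.real] using this
  have hsum : (ρ U).toReal + (ρ Uᶜ).toReal = 1 := by
    rw [← ENNReal.toReal_add (measure_ne_top ρ U) (measure_ne_top ρ Uᶜ),
      measure_add_measure_compl hUm, measure_univ]
    simp
  have hSle : S ≤ ℓ z₀ := key z₀
  have e : ℓ z₀ * ((ρ U).toReal + (ρ Uᶜ).toReal) = ℓ z₀ := by rw [hsum]; ring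
  have : ℓ z₀ + ε * (ρ U).toReal ≤ S := by
    rw [hSdef, hsplit]
    nlinarith [h1, h2, e]
  nlinarith [hρUreal, hεpos]
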